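/- Let m ∈ ℤ∖{0}, μ ∈ ℂ with Im μ ≠ 0, and let u = Σ_{n ≥ max(2,|m|)} c_n Y_n^m ∈ L²(S²) satisfy μ u = cos θ · (I + 6Δ^{−1}) u. Then u = c Y_2^m for some constant c if |m| ∈ {1,2}, and u = 0 if |m| ≥ 3. -/

import Mathlib

open Real

/-- Eigenvalue `λ_n = n(n+1)` of `−Δ` on the unit sphere `S²`. -/
def lam (n : ℕ) : ℝ := n * (n + 1)

/-- The recurrence coefficient `a_n^m = √((n−m)(n+m)/((2n−1)(2n+1)))` in
`cos θ · Y_n^m = a_n^m Y_{n−1}^m + a_{n+1}^m Y_{n+1}^m`. -/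
noncomputable def aCoef (n : ℕ) (m : ℤ) : ℝ :=
  Real.sqrt ((((n : ℝ) - (m : ℝ)) * ((n : ℝ) + (m : ℝ))) / ((2 * (n : ℝ) - 1) * (2 * (n : ℝ) + 1)))

open Filter

lemma aux_im (μ x y z : ℂ) (B0 B1 B2 A1 A2 : ℝ)
    (h : μ * y = ((B2 * A2 : ℝ) : ℂ) * z + ((B0 * A1 : ℝ) : ℂ) * x) :
    μ.im * (B1 * ‖y‖ ^ 2) =
      B1 * B2 * A2 * ((starRingEnd ℂ y) * z).im - B0 * B1 * A1 * ((starRingEnd ℂ x) * y).im := by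
  have h1 := congrArg Complex.re h
  have h2 := congrArg Complex.im h
  simp [Complex.mul_re, Complex.mul_im, Complex.add_re, Complex.add_im] at h1 h2
  simp [Complex.mul_im, Complex.conj_re, Complex.conj_im, Complex.sq_norm, Complex.normSq_apply]
  linear_combination B1 * y.re * h2 - B1 * y.im * h1

/-- Case `Im μ ≠ 0` in the proof of Theorem `T:NoEi_Pm`, stated in terms of the
coefficients of the expansion `u = Σ_{n ≥ max(2,|m|)} c_n Y_n^m ∈ P_m L²₀(S²)`.
Since `cos θ · Y_n^m = a_n^m Y_{n−1}^m + a_{n+1}^m Y_{n+1}^m` and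
`(I + 6Δ^{−1})Y_n^m = (1 − 6/λ_n)Y_n^m`, the equation `μ u = cos θ · (I + 6Δ^{−1})u`
is equivalent to the stated coefficient recurrence.  Conclusion: `u = c Y_2^m` for
some constant if `|m| ∈ {1,2}`, and `u = 0` if `|m| ≥ 3`. -/
theorem stmt_11 (m : ℤ) (hm : m ≠ 0) (μ : ℂ) (hμ : μ.im ≠ 0) (c : ℕ → ℂ)
    (hsupp : ∀ n, n < max 2 m.natAbs → c n = 0)
    (hsum : Summable fun n => ‖c n‖ ^ 2)
    (heq : ∀ n, max 1 m.natAbs ≤ n →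
      μ * c n = (((1 - 6 / lam (n + 1)) * aCoef (n + 1) m : ℝ) : ℂ) * c (n + 1)
        + (((1 - 6 / lam (n - 1)) * aCoef n m : ℝ) : ℂ) * c (n - 1)) :
    ((m.natAbs = 1 ∨ m.natAbs = 2) → ∀ n, n ≠ 2 → c n = 0) ∧
    (3 ≤ m.natAbs → ∀ n, c n = 0) := by
  set b : ℕ → ℝ := fun n => 1 - 6 / lam n with hb_def
  set s : ℕ → ℝ := fun K => b K * b (K + 1) * aCoef (K + 1) m *
      ((starRingEnd ℂ (c K)) * c (K + 1)).im with hs_def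
  -- small support facts
  have hc01 : ∀ n, n < 2 → c n = 0 := fun n hn => hsupp n (lt_of_lt_of_le hn (le_max_left _ _))
  -- bounds on lam
  have hlam_pos : ∀ n : ℕ, 1 ≤ n → (2 : ℝ) ≤ lam n := by
    intro n hn
    have : (1 : ℝ) ≤ (n : ℝ) := by exact_mod_cast hn
    simp only [lam]
    nlinarith
  have hb_lb : ∀ n, -2 ≤ b n := by
    intro n
    rcases Nat.eq_zero_or_pos n with h | h
    · norm_num [hb_def, h, lam]
    · have h2 := hlam_pos n h
      have : 6 / lam n ≤ 3 := by
        rw [div_le_iff₀ (by linarith)]; linarith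
      simp only [hb_def]; linarith
  have hb_ub : ∀ n, b n ≤ 1 := by
    intro n
    rcases Nat.eq_zero_or_pos n with h | h
    · norm_num [hb_def, h, lam]
    · have h2 := hlam_pos n h
      have : 0 ≤ 6 / lam n := by positivity
      simp only [hb_def]; linarith
  have hb_abs : ∀ n, |b n| ≤ 2 := by
    intro n; rw [abs_le]; exact ⟨hb_lb n, by linarith [hb_ub n]⟩
  have hb_nonneg : ∀ n, 2 ≤ n → 0 ≤ b n := by
    intro n hn
    have hn' : (2 : ℝ) ≤ (n : ℝ) := by exact_mod_cast hn
    have h6 : (6 : ℝ) ≤ lam n := by simp only [lam]; nlinarith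
    have : 6 / lam n ≤ 1 := by rw [div_le_one (by linarith)]; exact h6
    simp only [hb_def]; linarith
  have hb_pos : ∀ n, 3 ≤ n → 0 < b n := by
    intro n hn
    have hn' : (3 : ℝ) ≤ (n : ℝ) := by exact_mod_cast hn
    have h6 : (6 : ℝ) < lam n := by simp only [lam]; nlinarith
    have : 6 / lam n < 1 := by rw [div_lt_one (by linarith)]; exact h6
    simp only [hb_def]; linarith
  have ha_bounds : ∀ n : ℕ, 1 ≤ n → 0 ≤ aCoef n m ∧ aCoef n m ≤ 1 := by
    intro n hn
    refine ⟨Real.sqrt_nonneg _, ?_⟩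
    have hn' : (1 : ℝ) ≤ (n : ℝ) := by exact_mod_cast hn
    have : (((n : ℝ) - (m : ℝ)) * ((n : ℝ) + (m : ℝ))) / ((2 * (n : ℝ) - 1) * (2 * (n : ℝ) + 1))
        ≤ 1 := by
      rw [div_le_one (by nlinarith)]
      nlinarith [sq_nonneg (m : ℝ), sq_nonneg ((n : ℝ) - 1)]
    calc aCoef n m ≤ Real.sqrt 1 := Real.sqrt_le_sqrt this
      _ = 1 := Real.sqrt_one
  -- the key telescoping identity
  have key : ∀ K, μ.im * ∑ n ∈ Finset.range (K + 1), b n * ‖c n‖ ^ 2 = s K := by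
    intro K
    induction K with
    | zero =>
        simp [hs_def, hc01 0 (by norm_num), hc01 1 (by norm_num)]
    | succ K ih =>
        rw [Finset.sum_range_succ, mul_add, ih]
        by_cases h : max 1 m.natAbs ≤ K + 1
        · have hrec := heq (K + 1) h
          simp only [Nat.add_sub_cancel] at hrec
          have := aux_im μ (c K) (c (K + 1)) (c (K + 2)) (b K) (b (K + 1)) (b (K + 2))
            (aCoef (K + 1) m) (aCoef (K + 2) m) hrec
          simp only [hs_def]
          linarith [this]
        · have h1 : c (K + 1) = 0 := by
            apply hsupp
            have := lt_of_not_ge h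
            exact lt_of_lt_of_le this (max_le_max (by norm_num) le_rfl)
          simp [hs_def, h1]
  -- s tends to zero
  have hcn : Tendsto (fun n => ‖c n‖) atTop (nhds 0) := by
    have h2 := hsum.tendsto_atTop_zero
    have h3 : (fun n => ‖c n‖) = fun n => Real.sqrt (‖c n‖ ^ 2) := by
      funext n; rw [Real.sqrt_sq (norm_nonneg _)]
    have h4 := (Real.continuous_sqrt.tendsto 0).comp h2
    rw [Real.sqrt_zero] at h4
    rw [h3]; exact h4
  have hs0 : Tendsto s atTop (nhds 0) := by
    have hbound : ∀ K, ‖s K‖ ≤ 4 * (‖c K‖ * ‖c (K + 1)‖) := by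
      intro K
      have hIm : |((starRingEnd ℂ (c K)) * c (K + 1)).im| ≤ ‖c K‖ * ‖c (K + 1)‖ := by
        calc |((starRingEnd ℂ (c K)) * c (K + 1)).im| ≤ ‖(starRingEnd ℂ (c K)) * c (K + 1)‖ :=
              Complex.abs_im_le_norm _
          _ = ‖c K‖ * ‖c (K + 1)‖ := by rw [norm_mul, RCLike.norm_conj]
      have ha := (ha_bounds (K + 1) (by omega)).2
      have ha0 := (ha_bounds (K + 1) (by omega)).1
      have := hb_abs K
      have := hb_abs (K + 1)
      simp only [hs_def, Real.norm_eq_abs, abs_mul]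
      have h1 : |aCoef (K + 1) m| ≤ 1 := by rwa [abs_of_nonneg ha0]
      have h2 : |b K| * |b (K + 1)| ≤ 4 := by
        nlinarith [abs_nonneg (b K), abs_nonneg (b (K + 1))]
      have h3 : |b K| * |b (K + 1)| * |aCoef (K + 1) m| ≤ 4 := by
        nlinarith [abs_nonneg (aCoef (K + 1) m),
          mul_nonneg (abs_nonneg (b K)) (abs_nonneg (b (K + 1)))]
      exact mul_le_mul h3 hIm (abs_nonneg _) (by norm_num)
    have hlim : Tendsto (fun K => 4 * (‖c K‖ * ‖c (K + 1)‖)) atTop (nhds 0) := by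
      have h2 : Tendsto (fun K => ‖c (K + 1)‖) atTop (nhds 0) :=
        hcn.comp (tendsto_add_atTop_nat 1)
      have := (hcn.mul h2)
      simpa using (tendsto_const_nhds (x := (4 : ℝ))).mul this
    exact squeeze_zero_norm hbound hlim
  -- partial sums tend to zero
  have hP0 : Tendsto (fun K => ∑ n ∈ Finset.range (K + 1), b n * ‖c n‖ ^ 2) atTop (nhds 0) := by
    have : Tendsto (fun K => μ.im * ∑ n ∈ Finset.range (K + 1), b n * ‖c n‖ ^ 2) atTop
        (nhds 0) := by
      simp only [key]; exact hs0
    have h2 := this.const_mul (μ.im)⁻¹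
    simpa [← mul_assoc, inv_mul_cancel₀ hμ, mul_zero] using h2
  -- nonnegativity of terms
  have hg_nonneg : ∀ n, 0 ≤ b n * ‖c n‖ ^ 2 := by
    intro n
    rcases lt_or_ge n 2 with h | h
    · simp [hc01 n h]
    · exact mul_nonneg (hb_nonneg n h) (by positivity)
  -- partial sums are monotone, nonneg, tend to 0 ⇒ all zero
  have hzero : ∀ n, b n * ‖c n‖ ^ 2 = 0 := by
    have hmono : Monotone (fun K => ∑ n ∈ Finset.range (K + 1), b n * ‖c n‖ ^ 2) := by
      apply monotone_nat_of_le_succ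
      intro K
      rw [Finset.sum_range_succ (fun n => b n * ‖c n‖ ^ 2) (K + 1)]
      linarith [hg_nonneg (K + 1)]
    intro n
    have hle : ∑ k ∈ Finset.range (n + 1), b k * ‖c k‖ ^ 2 ≤ 0 := hmono.ge_of_tendsto hP0 n
    have hge : 0 ≤ ∑ k ∈ Finset.range (n + 1), b k * ‖c k‖ ^ 2 :=
      Finset.sum_nonneg fun k _ => hg_nonneg k
    have hsumeq : ∑ k ∈ Finset.range (n + 1), b k * ‖c k‖ ^ 2 = 0 := le_antisymm hle hge
    have h5 : b n * ‖c n‖ ^ 2 ≤ ∑ k ∈ Finset.range (n + 1), b k * ‖c k‖ ^ 2 :=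
      Finset.single_le_sum (f := fun k => b k * ‖c k‖ ^ 2)
        (fun k _ => hg_nonneg k) (Finset.self_mem_range_succ n)
    linarith [hg_nonneg n]
  have hc3 : ∀ n, 3 ≤ n → c n = 0 := by
    intro n hn
    have hb3 := hb_pos n hn
    have := hzero n
    have hnorm : ‖c n‖ ^ 2 = 0 := by
      rcases mul_eq_zero.1 this with h | h
      · exact absurd h (ne_of_gt hb3)
      · exact h
    have : ‖c n‖ = 0 := by nlinarith [norm_nonneg (c n)]
    exact norm_eq_zero.1 this
  constructor
  · intro hm12 n hn2
    rcases lt_or_ge n 3 with h | h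
    · interval_cases n
      · exact hc01 0 (by norm_num)
      · exact hc01 1 (by norm_num)
      · exact absurd rfl hn2
    · exact hc3 n h
  · intro hm3 n
    rcases lt_or_ge n m.natAbs with h | h
    · exact hsupp n (lt_of_lt_of_le h (le_max_right _ _))
    · exact hc3 n (le_trans hm3 h)
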